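/- Let (L, ∨, ∧, ') be a weakly orthomodular lattice with smallest element 0 satisfying the double negation law, and define x → y := x' ∨ (x ∧ y). Then → is a W-implication on L, i.e., (x → 0) → 0 = x, ((x ∧ y) → 0) → x = x, and (x ∧ y) ∨ (x → 0) = x → y. -/
import Mathlib

/-- In a weakly orthomodular lattice with 0 satisfying the double negation law,
x → y := x' ⊔ (x ⊓ y) is a W-implication. -/
theorem stmt_12 {L : Type*} [Lattice L] [OrderBot L] (f : L → L)
    (wom : ∀ x y : L, (x ⊓ y) ⊔ (x ⊓ f (x ⊓ y)) = x)
    (dneg : ∀ x : L, f (f x) = x)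
    (impl : L → L → L) (himpl : ∀ x y : L, impl x y = f x ⊔ (x ⊓ y)) :
    (∀ x : L, impl (impl x ⊥) ⊥ = x) ∧
    (∀ x y : L, impl (impl (x ⊓ y) ⊥) x = x) ∧
    (∀ x y : L, (x ⊓ y) ⊔ impl x ⊥ = impl x y) := by
  have hbot : ∀ x : L, impl x ⊥ = f x := by
    intro x; simp [himpl]
  refine ⟨?_, ?_, ?_⟩
  · intro x; rw [hbot, hbot, dneg]
  · intro x y
    rw [hbot, himpl, dneg, inf_comm (f (x ⊓ y)) x]
    exact wom x y
  · intro x y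
    rw [hbot, himpl, sup_comm]
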